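/- Let p be a prime number, let G be a finitely generated abelian group, and let ψ : G → G be an injective group endomorphism such that ψ(x) ∈ p·G for every x ∈ G. Then the subgroup I := ⋂_{j≥0} ψ^j(G) is finite and every element of I has order prime to p (equivalently, p does not divide the order of I). -/

import Mathlib

/-- If `ψ` is an injective endomorphism of a finitely generated abelian group
`G` with `ψ(G) ⊆ p·G`, then `I = ⋂ j, ψ^j(G)` is finite and every element of
`I` has (finite) order prime to `p`. -/
theorem finite_and_coprime_order_of_iInter {G : Type*} [AddCommGroup G]
    [AddGroup.FG G] (p : ℕ) (hp : p.Prime)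
    (ψ : AddMonoid.End G) (hψ : Function.Injective ψ)
    (hdvd : ∀ x : G, ∃ y : G, ψ x = p • y) :
    (⋂ j : ℕ, Set.range ((⇑ψ)^[j])).Finite ∧
    ∀ x ∈ ⋂ j : ℕ, Set.range ((⇑ψ)^[j]),
      ∃ n : ℕ, 1 ≤ n ∧ Nat.Coprime n p ∧ n • x = 0 := by
  classical
  haveI : Module.Finite ℤ G := Module.Finite.iff_addGroup_fg.mpr inferInstance
  -- iterates commute with `p • ·`
  have hcomm : ∀ (j : ℕ) (w : G), (⇑ψ)^[j] (p • w) = p • (⇑ψ)^[j] w := by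
    intro j
    induction j with
    | zero => intro w; simp
    | succ j ih =>
      intro w
      rw [Function.iterate_succ_apply, map_nsmul, ih, Function.iterate_succ_apply]
  -- every element of the intersection is divisible by all powers of p
  have hiter : ∀ (j : ℕ) (z : G), ∃ y : G, (⇑ψ)^[j] z = p ^ j • y := by
    intro j
    induction j with
    | zero => intro z; exact ⟨z, by simp⟩
    | succ j ih =>
      intro z
      obtain ⟨w, hw⟩ := hdvd z
      obtain ⟨y, hy⟩ := ih w
      refine ⟨y, ?_⟩
      rw [Function.iterate_succ_apply, hw, hcomm, hy, ← smul_assoc, smul_eq_mul,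
        pow_succ, mul_comm]
  have hdiv : ∀ x ∈ ⋂ j : ℕ, Set.range ((⇑ψ)^[j]), ∀ j : ℕ, ∃ y : G, x = p ^ j • y := by
    intro x hx j
    obtain ⟨z, hz⟩ := Set.mem_iInter.mp hx j
    obtain ⟨y, hy⟩ := hiter j z
    exact ⟨y, by rw [← hz, hy]⟩
  -- every element of the intersection is torsion
  set T : Submodule ℤ G := Submodule.torsion ℤ G with hT
  have hxT : ∀ x ∈ ⋂ j : ℕ, Set.range ((⇑ψ)^[j]), x ∈ T := by
    intro x hx
    -- work in the torsion-free quotient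
    set Q := G ⧸ T
    haveI : Module.Free ℤ Q := Module.free_of_finite_type_torsion_free'
    set B := Module.Free.chooseBasis ℤ Q with hB
    have hxq : ∀ j : ℕ, ∃ y : Q, Submodule.Quotient.mk (p := T) x = (p : ℤ) ^ j • y := by
      intro j
      obtain ⟨y, hy⟩ := hdiv x hx j
      refine ⟨Submodule.Quotient.mk y, ?_⟩
      rw [hy, ← Submodule.Quotient.mk_smul, ← Nat.cast_pow, Nat.cast_smul_eq_nsmul]
    have hq0 : (Submodule.Quotient.mk (p := T) x : Q) = 0 := by
      have hall : ∀ i, B.repr (Submodule.Quotient.mk (p := T) x) i = 0 := by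
        intro i
        set a : ℤ := B.repr (Submodule.Quotient.mk (p := T) x) i with ha
        have hdvda : ∀ j : ℕ, (p : ℤ) ^ j ∣ a := by
          intro j
          obtain ⟨y, hy⟩ := hxq j
          refine ⟨B.repr y i, ?_⟩
          rw [ha, hy, map_smul, Finsupp.coe_smul, Pi.smul_apply, smul_eq_mul]
        by_contra h0
        set j := a.natAbs
        have h1 : |a| < (p : ℤ) ^ j := by
          have h2 : a.natAbs < 2 ^ j := Nat.lt_two_pow_self
          have h3 : (2 : ℕ) ^ j ≤ p ^ j := Nat.pow_le_pow_left hp.two_le _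
          rw [Int.abs_eq_natAbs]
          exact_mod_cast lt_of_lt_of_le h2 h3
        exact h0 (Int.eq_zero_of_abs_lt_dvd (hdvda j) h1)
      exact B.repr.injective (a₂ := 0) (by ext i; simpa using hall i)
    rwa [Submodule.Quotient.mk_eq_zero] at hq0
  -- the torsion submodule is finite
  haveI hTfin : Finite T := by
    haveI : Module.Finite ℤ T := Module.Finite.iff_fg.mpr (IsNoetherian.noetherian T)
    exact Module.finite_of_fg_torsion ↥T (Submodule.torsion_isTorsion (R := ℤ) (M := G))
  constructor
  · exact Set.Finite.subset (Set.toFinite (T : Set G)) hxT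
  · intro x hx
    have hxT' := hxT x hx
    set e := AddMonoid.exponent T with he
    have he0 : e ≠ 0 := AddMonoid.exponent_ne_zero_of_finite
    set k := e.factorization p with hk
    obtain ⟨y, hy⟩ := hdiv x hx k
    -- y is torsion
    have h2 : e • (⟨x, hxT'⟩ : T) = 0 := AddMonoid.exponent_nsmul_eq_zero _
    have h3 : e • x = 0 := by
      have := congrArg (Subtype.val) h2
      simpa using this
    have hyT : y ∈ T := by
      rw [Submodule.mem_torsion_iff]
      refine ⟨⟨(e : ℤ) * (p : ℤ) ^ k, mem_nonZeroDivisors_iff_ne_zero.mpr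
        (mul_ne_zero (Int.natCast_ne_zero.mpr he0)
          (pow_ne_zero _ (Int.natCast_ne_zero.mpr hp.pos.ne')))⟩, ?_⟩
      have h1 : ((e : ℤ) * (p : ℤ) ^ k) • y = (e : ℤ) • x := by
        rw [mul_smul, hy, ← Nat.cast_pow, Nat.cast_smul_eq_nsmul, Nat.cast_smul_eq_nsmul,
          Nat.cast_smul_eq_nsmul]
      simp only [Submonoid.mk_smul, h1]
      rw [Nat.cast_smul_eq_nsmul, h3]
    refine ⟨e / p ^ k, ?_, ?_, ?_⟩
    · exact Nat.one_le_iff_ne_zero.mpr (Nat.ordCompl_pos p he0).ne'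
    · exact (Nat.coprime_ordCompl hp he0).symm
    · have h4 : e • (⟨y, hyT⟩ : T) = 0 := AddMonoid.exponent_nsmul_eq_zero _
      have h5 : e • y = 0 := by
        have := congrArg (Subtype.val) h4
        simpa using this
      rw [hy, smul_smul, mul_comm, hk, Nat.ordProj_mul_ordCompl_eq_self, h5]
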